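/- arXiv:2210.15175 — 2 statements merged into one kernel-verified Lean document; each statement's English description precedes it below -/
import Mathlib

section
/- There is a universal constant C > 0 such that the following holds. Let X be a finite partially ordered set, let ℓ : [0,1]×[0,1] → ℝ≥0 be an L-Lipschitz loss function, let ε > 0 and n ≥ 1 with |X| ≥ max{n, 2}. Then there exists a randomized algorithm M mapping each dataset D ∈ (X×[0,1])^n to a probability distribution over monotone functions f : X → [0,1], such that M is ε-differentially private and for every dataset D, the expected excess empirical risk E_{f∼M(D)}[L_ℓ(f;D)] − min_{g monotone} L_ℓ(g;D) is at most C · L · sqrt(width(X)·log|X|/(εn)). -/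
open MeasureTheory

noncomputable section

/-- The (normalized) empirical risk of `f` on dataset `D` with loss `ℓ`. -/
def empRisk {X : Type*} (ℓ : ℝ → ℝ → ℝ) {n : ℕ} (f : X → ℝ) (D : Fin n → X × ℝ) : ℝ :=
  (1 / (n : ℝ)) * ∑ i, ℓ (f (D i).1) (D i).2

/-- A valid dataset: all labels lie in `[0,1]`. -/
def IsDataset {X : Type*} {n : ℕ} (D : Fin n → X × ℝ) : Prop :=
  ∀ i, (D i).2 ∈ Set.Icc (0 : ℝ) 1

/-- Two (valid) datasets are neighboring if they differ in at most one entry. -/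
def NeighborDS {X : Type*} {n : ℕ} (D D' : Fin n → X × ℝ) : Prop :=
  IsDataset D ∧ IsDataset D' ∧ ∃ i, ∀ j, j ≠ i → D j = D' j

/-- A monotone function on the poset `X` taking values in `[0,1]`. -/
def IsMonotone01 {X : Type*} [PartialOrder X] (f : X → ℝ) : Prop :=
  Monotone f ∧ ∀ x, f x ∈ Set.Icc (0 : ℝ) 1

/-- The optimal empirical risk over all monotone `[0,1]`-valued functions. -/
def optRisk {X : Type*} [PartialOrder X] (ℓ : ℝ → ℝ → ℝ) {n : ℕ} (D : Fin n → X × ℝ) : ℝ :=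
  ⨅ g : {g : X → ℝ // IsMonotone01 g}, empRisk ℓ g.1 D

/-- `(ε, δ)`-differential privacy of a mechanism `M` w.r.t. a neighboring relation. -/
def IsDP {I Ω : Type*} [MeasurableSpace Ω] (Neighbor : I → I → Prop)
    (M : I → Measure Ω) (ε δ : ℝ) : Prop :=
  ∀ D D', Neighbor D D' → ∀ S : Set Ω, MeasurableSet S →
    M D S ≤ ENNReal.ofReal (Real.exp ε) * M D' S + ENNReal.ofReal δ

/-- A loss function `ℓ : [0,1] × [0,1] → ℝ≥0` that is `L`-Lipschitz in its first argument. -/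
def IsLipschitzLoss (ℓ : ℝ → ℝ → ℝ) (L : ℝ) : Prop :=
  (∀ y z : ℝ, y ∈ Set.Icc (0:ℝ) 1 → z ∈ Set.Icc (0:ℝ) 1 → 0 ≤ ℓ y z) ∧
  (∀ y y' z : ℝ, y ∈ Set.Icc (0:ℝ) 1 → y' ∈ Set.Icc (0:ℝ) 1 → z ∈ Set.Icc (0:ℝ) 1 →
    |ℓ y z - ℓ y' z| ≤ L * |y - y'|)

/-- An `R`-distance-based loss function: `ℓ(y,y') = g(|y - y'|)` for a non-decreasing
nonnegative `g` with `g 0 = 0` and `g (1/2) ≥ R`. -/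
def IsDistanceBasedLoss (ℓ : ℝ → ℝ → ℝ) (R : ℝ) : Prop :=
  ∃ g : ℝ → ℝ, MonotoneOn g (Set.Icc (0:ℝ) 1) ∧ (∀ t ∈ Set.Icc (0:ℝ) 1, 0 ≤ g t) ∧
    g 0 = 0 ∧ R ≤ g (1 / 2) ∧
    ∀ y y' : ℝ, y ∈ Set.Icc (0:ℝ) 1 → y' ∈ Set.Icc (0:ℝ) 1 → ℓ y y' = g |y - y'|

/-- The width of a poset: the largest size of an antichain. -/
def posetWidth (X : Type*) [PartialOrder X] : ℕ :=
  sSup {k | ∃ A : Finset X, IsAntichain (· ≤ ·) (A : Set X) ∧ A.card = k}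

/-- An isotonic-regression mechanism: on each valid dataset it outputs a probability
distribution supported on monotone `[0,1]`-valued functions. -/
def IsIsoRegAlg {X : Type*} [PartialOrder X] {n : ℕ}
    (M : (Fin n → X × ℝ) → Measure (X → ℝ)) : Prop :=
  ∀ D : Fin n → X × ℝ, IsDataset D →
    IsProbabilityMeasure (M D) ∧ M D {f | IsMonotone01 f} = 1

/- ### Auxiliary material -/

namespace DPIso
open Finset
open scoped Classical ENNReal

variable {X : Type} [Fintype X] [PartialOrder X]

/-- minimal elements of a finset -/
def mins (U : Finset X) : Finset X := U.filter (fun x => ∀ y ∈ U, ¬ y < x)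

lemma mins_antichain (U : Finset X) : IsAntichain (· ≤ ·) ((mins U : Finset X) : Set X) := by
  intro a ha b hb hab hle
  simp only [Finset.coe_filter, Set.mem_setOf_eq, mins, Finset.mem_coe, Finset.mem_filter] at ha hb
  exact hb.2 a ha.1 (lt_of_le_of_ne hle hab)

lemma mem_of_upset {U : Finset X} (hU : ∀ x ∈ U, ∀ y, x ≤ y → y ∈ U) {x : X} :
    x ∈ U ↔ ∃ a ∈ mins U, a ≤ x := by
  constructor
  · intro hx
    obtain ⟨a, ha, hmin⟩ : ∃ a ∈ U.filter (· ≤ x), ∀ y ∈ U.filter (· ≤ x), ¬ y < a := by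
      obtain ⟨a, ha⟩ := Finset.exists_minimal (⟨x, by simp [hx]⟩ : (U.filter (· ≤ x)).Nonempty)
      exact ⟨a, ha.1, fun y hy hlt => hlt.not_ge (ha.2 hy hlt.le)⟩
    simp only [Finset.mem_filter] at ha
    refine ⟨a, ?_, ha.2⟩
    simp only [mins, Finset.mem_filter]
    exact ⟨ha.1, fun y hy hlt => hmin y (Finset.mem_filter.mpr ⟨hy, le_trans hlt.le ha.2⟩) hlt⟩
  · rintro ⟨a, ha, hax⟩
    exact hU a (Finset.mem_filter.mp ha).1 x hax

lemma width_bddAbove :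
    BddAbove {k | ∃ A : Finset X, IsAntichain (· ≤ ·) (A : Set X) ∧ A.card = k} := by
  refine ⟨Fintype.card X, ?_⟩
  rintro k ⟨A, -, rfl⟩
  exact A.card_le_univ

lemma antichain_card_le {A : Finset X} (h : IsAntichain (· ≤ ·) (A : Set X)) :
    A.card ≤ posetWidth X :=
  le_csSup width_bddAbove ⟨A, h, rfl⟩

lemma one_le_width [Nonempty X] : 1 ≤ posetWidth X := by
  obtain ⟨x⟩ := ‹Nonempty X›
  refine le_csSup width_bddAbove ⟨{x}, ?_, Finset.card_singleton x⟩
  simp [IsAntichain, Set.Subsingleton.pairwise]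

lemma width_le_card : posetWidth X ≤ Fintype.card X := by
  refine csSup_le ⟨0, ⟨∅, by rw [Finset.coe_empty]; exact Set.subsingleton_empty.isAntichain _, rfl⟩⟩ ?_
  rintro k ⟨A, -, rfl⟩
  exact A.card_le_univ

/-- the set of antichains -/
def antichains (X : Type) [Fintype X] [PartialOrder X] : Finset (Finset X) :=
  Finset.univ.filter fun A => IsAntichain (· ≤ ·) (A : Set X)

lemma card_antichains_le (hN : 1 ≤ Fintype.card X) :
    (antichains X).card ≤ (Fintype.card X + 1) ^ (posetWidth X + 1) := by
  set w := posetWidth X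
  set N := Fintype.card X
  have hsub : antichains X ⊆ (Finset.range (w+1)).biUnion
      (fun k => Finset.univ.powersetCard k) := by
    intro A hA
    have hAa : IsAntichain (· ≤ ·) (A : Set X) := by
      simpa [antichains] using hA
    refine Finset.mem_biUnion.mpr ⟨A.card, ?_, ?_⟩
    · exact Finset.mem_range.mpr (Nat.lt_succ_of_le (antichain_card_le hAa))
    · exact Finset.mem_powersetCard.mpr ⟨A.subset_univ, rfl⟩
  calc (antichains X).card ≤ _ := Finset.card_le_card hsub
    _ ≤ ∑ k ∈ Finset.range (w+1), (Finset.univ.powersetCard k (α := X)).card :=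
        Finset.card_biUnion_le
    _ ≤ ∑ _k ∈ Finset.range (w+1), N ^ w := by
        refine Finset.sum_le_sum fun k hk => ?_
        rw [Finset.card_powersetCard, Finset.card_univ]
        calc N.choose k ≤ N ^ k := Nat.choose_le_pow N k
          _ ≤ N ^ w := Nat.pow_le_pow_right hN (Nat.lt_succ_iff.mp (Finset.mem_range.mp hk))
    _ = (w+1) * N ^ w := by rw [Finset.sum_const, Finset.card_range, smul_eq_mul]
    _ ≤ (N+1) * (N+1) ^ w := by
        exact Nat.mul_le_mul (Nat.succ_le_succ width_le_card)
          (Nat.pow_le_pow_left (Nat.le_succ N) w)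
    _ = (N+1) ^ (w+1) := by ring

/-- monotone functions into a grid -/
def Hfin (X : Type) [Fintype X] [PartialOrder X] (m : ℕ) : Finset (X → Fin (m+1)) :=
  Finset.univ.filter Monotone

lemma Hfin_nonempty (m : ℕ) : (Hfin X m).Nonempty :=
  ⟨fun _ => 0, by simp [Hfin, monotone_const]⟩

lemma card_filter_fin_lt {m k : ℕ} (hk : k ≤ m) :
    (Finset.univ.filter fun j : Fin m => (j:ℕ) < k).card = k := by
  have he : (Finset.univ.filter fun j : Fin m => (j:ℕ) < k) =
      (Finset.range k).attachFin
        (fun i hi => lt_of_lt_of_le (Finset.mem_range.mp hi) hk) := by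
    ext j; simp [Finset.mem_attachFin, Finset.mem_range]
  rw [he, Finset.card_attachFin, Finset.card_range]

lemma card_Hfin_le (hN : 1 ≤ Fintype.card X) (m : ℕ) :
    (Hfin X m).card ≤ ((Fintype.card X + 1) ^ (posetWidth X + 1)) ^ m := by
  set φ : (X → Fin (m+1)) → (Fin m → Finset X) :=
    fun g j => mins (Finset.univ.filter fun x => (j:ℕ) < (g x : ℕ))
  have hup : ∀ g : X → Fin (m+1), Monotone g → ∀ j : Fin m,
      ∀ x ∈ (Finset.univ.filter fun x => (j:ℕ) < (g x : ℕ)), ∀ y, x ≤ y →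
        y ∈ (Finset.univ.filter fun x => (j:ℕ) < (g x : ℕ)) := by
    intro g hg j x hx y hxy
    simp only [Finset.mem_filter, Finset.mem_univ, true_and] at hx ⊢
    exact lt_of_lt_of_le hx (hg hxy)
  have hval : ∀ g : X → Fin (m+1), ∀ x : X,
      (g x : ℕ) = (Finset.univ.filter fun j : Fin m => (j:ℕ) < (g x : ℕ)).card := by
    intro g x
    exact (card_filter_fin_lt (Nat.lt_succ_iff.mp (g x).isLt)).symm
  have hinj : Set.InjOn φ (Hfin X m) := by
    intro g hg g' hg' hφ
    have hgm : Monotone g := by simpa [Hfin] using hg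
    have hgm' : Monotone g' := by simpa [Hfin] using hg'
    funext x
    have hmem : ∀ j : Fin m, ((j:ℕ) < (g x : ℕ)) ↔ ((j:ℕ) < (g' x : ℕ)) := by
      intro j
      have h1 := mem_of_upset (hup g hgm j) (x := x)
      have h2 := mem_of_upset (hup g' hgm' j) (x := x)
      have hj : φ g j = φ g' j := by rw [hφ]
      simp only [Finset.mem_filter, Finset.mem_univ, true_and] at h1 h2
      rw [h1, h2, show mins (Finset.univ.filter fun x => (j:ℕ) < (g x : ℕ)) =
        mins (Finset.univ.filter fun x => (j:ℕ) < (g' x : ℕ)) from hj]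
    have : (g x : ℕ) = (g' x : ℕ) := by
      rw [hval g x, hval g' x]
      congr 1
      ext j
      simp [hmem j]
    exact Fin.val_injective this
  have hmaps : ∀ g ∈ Hfin X m, φ g ∈ Fintype.piFinset (fun _ : Fin m => antichains X) := by
    intro g _
    refine Fintype.mem_piFinset.mpr fun j => ?_
    simp only [antichains, Finset.mem_filter, Finset.mem_univ, true_and]
    exact mins_antichain _
  calc (Hfin X m).card ≤ (Fintype.piFinset (fun _ : Fin m => antichains X)).card :=
        Finset.card_le_card_of_injOn φ hmaps hinj
    _ = (antichains X).card ^ m := by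
        rw [Fintype.card_piFinset]; simp
    _ ≤ ((Fintype.card X + 1) ^ (posetWidth X + 1)) ^ m :=
        Nat.pow_le_pow_left (card_antichains_le hN) m

/- ### Gibbs / exponential mechanism analysis -/

lemma exp_decay {a b : ℝ} (ha : 1 ≤ a) (hab : a ≤ b) :
    b * Real.exp (-b) ≤ a * Real.exp (-a) := by
  have h1 : (b - a) + 1 ≤ Real.exp (b - a) := Real.add_one_le_exp _
  have h2 : Real.exp b = Real.exp a * Real.exp (b - a) := by
    rw [← Real.exp_add]; ring_nf
  have hea : 0 < Real.exp a := Real.exp_pos a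
  have heb : 0 < Real.exp b := Real.exp_pos b
  have h3 : b ≤ a * Real.exp (b - a) := by nlinarith
  rw [Real.exp_neg, Real.exp_neg, ← div_eq_mul_inv, ← div_eq_mul_inv,
    div_le_div_iff₀ heb hea]
  calc b * Real.exp a ≤ (a * Real.exp (b - a)) * Real.exp a :=
        mul_le_mul_of_nonneg_right h3 hea.le
    _ = a * Real.exp b := by rw [h2]; ring

lemma per_term {lam t u : ℝ} (hl : 0 < lam) (ht : 0 ≤ t) (hu : 1 ≤ u) :
    t * Real.exp (-(lam * t)) ≤ (u / lam) * Real.exp (-(lam * t)) + u * Real.exp (-u) / lam := by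
  rcases le_or_gt t (u / lam) with h | h
  · have h2 : 0 ≤ u * Real.exp (-u) / lam := by positivity
    have := mul_le_mul_of_nonneg_right h (Real.exp_pos (-(lam * t))).le
    linarith
  · have hut : u ≤ lam * t := by
      rw [← div_le_iff₀' hl] at *; linarith
    have h3 : (lam * t) * Real.exp (-(lam * t)) ≤ u * Real.exp (-u) := exp_decay hu hut
    have h4 : 0 ≤ (u / lam) * Real.exp (-(lam * t)) := by positivity
    have h5 : t * Real.exp (-(lam * t)) ≤ u * Real.exp (-u) / lam := by
      rw [le_div_iff₀ hl]
      calc t * Real.exp (-(lam * t)) * lam = (lam * t) * Real.exp (-(lam * t)) := by ring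
        _ ≤ _ := h3
    linarith

lemma gibbs_sum {G : Type*} (s : Finset G) (t : G → ℝ) (ht : ∀ g ∈ s, 0 ≤ t g)
    {g0 : G} (hg0 : g0 ∈ s) (ht0 : t g0 = 0) {lam : ℝ} (hl : 0 < lam) :
    (∑ g ∈ s, t g * Real.exp (-(lam * t g))) ≤
      (2 * (Real.log s.card + 1) / lam) * ∑ g ∈ s, Real.exp (-(lam * t g)) := by
  set u := Real.log s.card + 1 with hu_def
  have hcard : (1:ℝ) ≤ s.card := by exact_mod_cast Finset.card_pos.mpr ⟨g0, hg0⟩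
  have hu : 1 ≤ u := by
    have : 0 ≤ Real.log s.card := Real.log_nonneg hcard
    linarith
  have hZ : 1 ≤ ∑ g ∈ s, Real.exp (-(lam * t g)) := by
    have h1 : Real.exp (-(lam * t g0)) = 1 := by simp [ht0]
    calc (1:ℝ) = Real.exp (-(lam * t g0)) := h1.symm
      _ ≤ _ := Finset.single_le_sum (f := fun g => Real.exp (-(lam * t g)))
          (fun g _ => (Real.exp_pos _).le) hg0
  have hcexp : (s.card : ℝ) * Real.exp (-u) ≤ 1 := by
    have : Real.exp (-u) = (Real.exp (Real.log s.card))⁻¹ * Real.exp (-1) := by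
      rw [hu_def, ← Real.exp_neg, ← Real.exp_add]; ring_nf
    rw [this, Real.exp_log (by linarith : (0:ℝ) < s.card)]
    have he1 : Real.exp (-1 : ℝ) ≤ 1 := by
      rw [Real.exp_le_one_iff]; norm_num
    calc (s.card:ℝ) * ((s.card:ℝ)⁻¹ * Real.exp (-1)) = Real.exp (-1 : ℝ) := by
          field_simp
      _ ≤ 1 := he1
  calc ∑ g ∈ s, t g * Real.exp (-(lam * t g))
      ≤ ∑ g ∈ s, ((u / lam) * Real.exp (-(lam * t g)) + u * Real.exp (-u) / lam) :=
        Finset.sum_le_sum fun g hg => per_term hl (ht g hg) hu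
    _ = (u / lam) * (∑ g ∈ s, Real.exp (-(lam * t g))) + (s.card : ℝ) * (u * Real.exp (-u) / lam) := by
        rw [Finset.sum_add_distrib, ← Finset.mul_sum, Finset.sum_const, nsmul_eq_mul]
    _ ≤ (u / lam) * (∑ g ∈ s, Real.exp (-(lam * t g))) + (u / lam) * (∑ g ∈ s, Real.exp (-(lam * t g))) := by
        have h6 : (s.card : ℝ) * (u * Real.exp (-u) / lam) ≤ u / lam := by
          have h7 : (s.card : ℝ) * (u * Real.exp (-u) / lam) = ((s.card : ℝ) * Real.exp (-u)) * (u / lam) := by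
            ring
          rw [h7]
          have : 0 ≤ u / lam := by positivity
          nlinarith
        have h8 : u / lam ≤ (u / lam) * (∑ g ∈ s, Real.exp (-(lam * t g))) := by
          nlinarith [hZ, div_nonneg (by linarith : (0:ℝ) ≤ u) hl.le]
        linarith
    _ = (2 * u / lam) * ∑ g ∈ s, Real.exp (-(lam * t g)) := by ring

lemma gibbs_expect {G : Type*} (s : Finset G) (F : G → ℝ)
    {g0 : G} (hg0 : g0 ∈ s) (hmin : ∀ g ∈ s, F g0 ≤ F g) {lam : ℝ} (hl : 0 < lam) :
    (∑ g ∈ s, (Real.exp (-(lam * F g)) / (∑ g' ∈ s, Real.exp (-(lam * F g')))) * F g)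
      ≤ F g0 + 2 * (Real.log s.card + 1) / lam := by
  set t : G → ℝ := fun g => F g - F g0 with ht_def
  set Z' : ℝ := ∑ g ∈ s, Real.exp (-(lam * t g)) with hZ'_def
  have hZ'pos : 0 < Z' := Finset.sum_pos (fun g _ => Real.exp_pos _) ⟨g0, hg0⟩
  have hE0 : ∀ g, Real.exp (-(lam * F g)) = Real.exp (-(lam * F g0)) * Real.exp (-(lam * t g)) := by
    intro g; rw [← Real.exp_add]; congr 1; simp [ht_def]; ring
  have hZ : (∑ g' ∈ s, Real.exp (-(lam * F g'))) = Real.exp (-(lam * F g0)) * Z' := by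
    rw [hZ'_def, Finset.mul_sum]
    exact Finset.sum_congr rfl fun g _ => hE0 g
  have hne : Real.exp (-(lam * F g0)) ≠ 0 := (Real.exp_pos _).ne'
  have hterm : ∀ g ∈ s, (Real.exp (-(lam * F g)) / (∑ g' ∈ s, Real.exp (-(lam * F g')))) * F g
      = (Real.exp (-(lam * t g)) / Z') * t g + (Real.exp (-(lam * t g)) / Z') * F g0 := by
    intro g _
    rw [hZ, hE0 g, mul_div_mul_left _ _ hne]
    have : F g = t g + F g0 := by simp [ht_def]
    rw [this]; ring
  rw [Finset.sum_congr rfl hterm, Finset.sum_add_distrib]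
  have h1 : ∑ g ∈ s, (Real.exp (-(lam * t g)) / Z') * F g0 = F g0 := by
    rw [← Finset.sum_mul, ← Finset.sum_div, ← hZ'_def, div_self hZ'pos.ne', one_mul]
  have h2 : ∑ g ∈ s, (Real.exp (-(lam * t g)) / Z') * t g ≤ 2 * (Real.log s.card + 1) / lam := by
    have hkey := gibbs_sum s t (fun g hg => by simp [ht_def]; exact hmin g hg) hg0
      (by simp [ht_def]) hl
    have heq : ∑ g ∈ s, (Real.exp (-(lam * t g)) / Z') * t g
        = (∑ g ∈ s, t g * Real.exp (-(lam * t g))) / Z' := by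
      rw [Finset.sum_div]; exact Finset.sum_congr rfl fun g _ => by ring
    rw [heq, div_le_iff₀ hZ'pos]
    rw [← hZ'_def] at hkey
    exact hkey
  linarith

/- ### Measure mixture helpers -/

variable {G : Type*} {α : Type*} [MeasurableSpace α] [MeasurableSingletonClass α]

lemma mix_apply (s : Finset G) (w : G → ℝ≥0∞) (e : G → α) (S : Set α) :
    (∑ g ∈ s, w g • Measure.dirac (e g)) S = ∑ g ∈ s, w g * (Measure.dirac (e g)) S := by
  rw [Measure.coe_finset_sum]
  simp [Measure.smul_apply, smul_eq_mul]

lemma mix_apply_of_mem (s : Finset G) (w : G → ℝ≥0∞) (e : G → α) {S : Set α}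
    (hS : ∀ g ∈ s, e g ∈ S) :
    (∑ g ∈ s, w g • Measure.dirac (e g)) S = ∑ g ∈ s, w g := by
  rw [mix_apply]
  refine Finset.sum_congr rfl fun g hg => ?_
  rw [Measure.dirac_apply_of_mem (hS g hg), mul_one]

lemma integrable_dirac {F : α → ℝ} {a : α} : Integrable F (Measure.dirac a) := by
  refine (integrable_const (F a)).congr ?_
  rw [Filter.eventuallyEq_iff_exists_mem]
  exact ⟨{a}, by rw [MeasureTheory.mem_ae_iff]; simp, fun x hx => by simp at hx; simp [hx]⟩

lemma mix_integral (s : Finset G) (p : G → ℝ) (hp : ∀ g ∈ s, 0 ≤ p g) (e : G → α)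
    (F : α → ℝ) :
    (∫ f, F f ∂(∑ g ∈ s, ENNReal.ofReal (p g) • Measure.dirac (e g)))
      = ∑ g ∈ s, p g * F (e g) := by
  rw [integral_finset_sum_measure]
  · refine Finset.sum_congr rfl fun g hg => ?_
    rw [integral_smul_measure, integral_dirac, ENNReal.toReal_ofReal (hp g hg), smul_eq_mul]
  · intro g hg
    exact integrable_dirac.smul_measure ENNReal.ofReal_ne_top

/- ### Empirical-risk lemmas -/

lemma L_nonneg {ℓ : ℝ → ℝ → ℝ} {L : ℝ} (hℓ : IsLipschitzLoss ℓ L) : 0 ≤ L := by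
  have h := hℓ.2 0 1 0 (by norm_num) (by norm_num) (by norm_num)
  have h0 : (0:ℝ) ≤ |ℓ 0 0 - ℓ 1 0| := abs_nonneg _
  have h1 : |(0:ℝ) - 1| = 1 := by norm_num
  rw [h1, mul_one] at h
  linarith

lemma lip_diff_le {ℓ : ℝ → ℝ → ℝ} {L : ℝ} (hℓ : IsLipschitzLoss ℓ L) (hL : 0 ≤ L)
    {y y' z c : ℝ} (hy : y ∈ Set.Icc (0:ℝ) 1) (hy' : y' ∈ Set.Icc (0:ℝ) 1)
    (hz : z ∈ Set.Icc (0:ℝ) 1) (hc : |y - y'| ≤ c) :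
    ℓ y z - ℓ y' z ≤ L * c := by
  have h := hℓ.2 y y' z hy hy' hz
  have h2 : L * |y - y'| ≤ L * c := mul_le_mul_of_nonneg_left hc hL
  have h3 := (abs_le.mp (h.trans h2)).2
  linarith

lemma empRisk_le_of_close {X : Type} [Fintype X] {ℓ : ℝ → ℝ → ℝ} {L : ℝ}
    (hℓ : IsLipschitzLoss ℓ L) (hL : 0 ≤ L) {n : ℕ} (hn : 1 ≤ n)
    {D : Fin n → X × ℝ} (hD : IsDataset D) {f f' : X → ℝ}
    (hf : ∀ x, f x ∈ Set.Icc (0:ℝ) 1) (hf' : ∀ x, f' x ∈ Set.Icc (0:ℝ) 1)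
    {c : ℝ} (hc : ∀ x, |f x - f' x| ≤ c) :
    empRisk ℓ f D ≤ empRisk ℓ f' D + L * c := by
  have hnR : (0:ℝ) < n := by exact_mod_cast Nat.pos_of_ne_zero (by omega)
  have per : ∀ i : Fin n, ℓ (f (D i).1) (D i).2 ≤ ℓ (f' (D i).1) (D i).2 + L * c := by
    intro i
    have := lip_diff_le hℓ hL (hf (D i).1) (hf' (D i).1) (hD i) (hc (D i).1)
    linarith
  have hsum : ∑ i, ℓ (f (D i).1) (D i).2 ≤ ∑ i, (ℓ (f' (D i).1) (D i).2 + L * c) :=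
    Finset.sum_le_sum fun i _ => per i
  have hstep : (1/(n:ℝ)) * ∑ i, ℓ (f (D i).1) (D i).2
      ≤ (1/(n:ℝ)) * ∑ i, (ℓ (f' (D i).1) (D i).2 + L * c) :=
    mul_le_mul_of_nonneg_left hsum (by positivity)
  have heq : (1/(n:ℝ)) * ∑ i, (ℓ (f' (D i).1) (D i).2 + L * c)
      = (1/(n:ℝ)) * (∑ i, ℓ (f' (D i).1) (D i).2) + L * c := by
    rw [Finset.sum_add_distrib, Finset.sum_const, Finset.card_univ, Fintype.card_fin,
      nsmul_eq_mul, mul_add]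
    congr 1
    field_simp
  rw [heq] at hstep
  exact hstep

lemma empRisk_sub_eq {X : Type} [Fintype X] {ℓ : ℝ → ℝ → ℝ} {n : ℕ}
    {D D' : Fin n → X × ℝ} {i : Fin n} (hoff : ∀ j, j ≠ i → D j = D' j) (h : X → ℝ) :
    empRisk ℓ h D - empRisk ℓ h D'
      = (1/(n:ℝ)) * (ℓ (h (D i).1) (D i).2 - ℓ (h (D' i).1) (D' i).2) := by
  unfold empRisk
  rw [← mul_sub, ← Finset.sum_sub_distrib]
  congr 1
  rw [Finset.sum_eq_single_of_mem i (Finset.mem_univ i)]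
  intro j _ hj
  rw [hoff j hj]
  ring

lemma sens {X : Type} [Fintype X] {ℓ : ℝ → ℝ → ℝ} {L : ℝ}
    (hℓ : IsLipschitzLoss ℓ L) (hL : 0 ≤ L) {n : ℕ} (hn : 1 ≤ n)
    {D D' : Fin n → X × ℝ} (hD : IsDataset D) (hD' : IsDataset D')
    {i : Fin n} (hoff : ∀ j, j ≠ i → D j = D' j)
    {f f' : X → ℝ} (hf : ∀ x, f x ∈ Set.Icc (0:ℝ) 1) (hf' : ∀ x, f' x ∈ Set.Icc (0:ℝ) 1) :
    (empRisk ℓ f D - empRisk ℓ f D') - (empRisk ℓ f' D - empRisk ℓ f' D') ≤ 2 * L / n := by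
  have hnR : (0:ℝ) < n := by exact_mod_cast Nat.pos_of_ne_zero (by omega)
  rw [empRisk_sub_eq hoff f, empRisk_sub_eq hoff f']
  have habs : ∀ a : X, |f a - f' a| ≤ 1 := by
    intro a
    obtain ⟨h1, h2⟩ := hf a
    obtain ⟨h3, h4⟩ := hf' a
    rw [abs_le]; constructor <;> linarith
  have h1 : ℓ (f (D i).1) (D i).2 - ℓ (f' (D i).1) (D i).2 ≤ L * 1 :=
    lip_diff_le hℓ hL (hf _) (hf' _) (hD i) (habs _)
  have h2 : ℓ (f' (D' i).1) (D' i).2 - ℓ (f (D' i).1) (D' i).2 ≤ L * 1 :=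
    lip_diff_le hℓ hL (hf' _) (hf _) (hD' i) (by rw [abs_sub_comm]; exact habs _)
  have key : (ℓ (f (D i).1) (D i).2 - ℓ (f (D' i).1) (D' i).2)
      - (ℓ (f' (D i).1) (D i).2 - ℓ (f' (D' i).1) (D' i).2) ≤ 2 * L := by linarith
  have hfrac : (2:ℝ) * L / n = (1/(n:ℝ)) * (2 * L) := by ring
  rw [hfrac, ← mul_sub]
  exact mul_le_mul_of_nonneg_left key (by positivity)

end DPIso

set_option maxHeartbeats 2000000 in
/-- **Baseline exponential mechanism for general posets.** There is a universal constant
`C > 0` such that for any finite poset `X`, any `L`-Lipschitz loss `ℓ`, any `ε > 0` and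
`n ≥ 1` with `|X| ≥ max{n,2}`, there is an `ε`-DP isotonic-regression mechanism with
expected excess empirical risk at most `C · L · sqrt(width(X)·log|X| / (εn))`. -/
theorem dp_isotonic_regression_general_poset_baseline :
    ∃ C : ℝ, 0 < C ∧
      ∀ (X : Type) [Fintype X] [PartialOrder X],
        ∀ (ℓ : ℝ → ℝ → ℝ) (L : ℝ), IsLipschitzLoss ℓ L →
        ∀ (n : ℕ) (ε : ℝ), 0 < ε → 1 ≤ n → max n 2 ≤ Fintype.card X →
        ∃ M : (Fin n → X × ℝ) → Measure (X → ℝ),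
          IsIsoRegAlg M ∧
          IsDP NeighborDS M ε 0 ∧
          ∀ D : Fin n → X × ℝ, IsDataset D →
            (∫ f, empRisk ℓ f D ∂(M D)) - optRisk ℓ D ≤
              C * L * Real.sqrt ((posetWidth X : ℝ) * Real.log (Fintype.card X) / (ε * n)) := by
  classical
  refine ⟨100, by norm_num, ?_⟩
  intro X _ _ ℓ L hℓ n ε hε hn hcard
  have hN2 : 2 ≤ Fintype.card X := le_trans (le_max_right _ _) hcard
  have hN1 : 1 ≤ Fintype.card X := by omega
  haveI hXne : Nonempty X := Fintype.card_pos_iff.mp (by omega)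
  haveI : Nonempty {g : X → ℝ // IsMonotone01 g} :=
    ⟨⟨fun _ => 0, monotone_const, fun _ => ⟨le_refl _, zero_le_one⟩⟩⟩
  have hL0 : 0 ≤ L := DPIso.L_nonneg hℓ
  have hnR : (0:ℝ) < n := by exact_mod_cast Nat.pos_of_ne_zero (by omega)
  have hen : (0:ℝ) < ε * n := mul_pos hε hnR
  have hw1 : 1 ≤ posetWidth X := DPIso.one_le_width
  have hw1R : (1:ℝ) ≤ (posetWidth X : ℝ) := by exact_mod_cast hw1
  have hlogN : Real.log 2 ≤ Real.log (Fintype.card X) := by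
    apply Real.log_le_log (by norm_num)
    exact_mod_cast hN2
  have hlog2 : (2:ℝ)/3 ≤ Real.log 2 := by
    nlinarith [Real.log_two_gt_d9]
  have hwlog : (2:ℝ)/3 ≤ (posetWidth X : ℝ) * Real.log (Fintype.card X) := by nlinarith
  set N := Fintype.card X with hN_def
  set w := posetWidth X with hw_def
  set T := (w:ℝ) * Real.log N / (ε * n) with hT_def
  have hT0 : 0 < T := div_pos (by nlinarith) hen
  by_cases hcase : 0 < L ∧ T < 1
  · -- exponential mechanism
    obtain ⟨hLpos, hT1⟩ := hcase
    set rt := Real.sqrt T with hrt_def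
    have hrt0 : 0 < rt := Real.sqrt_pos.mpr hT0
    have hrt1 : rt ≤ 1 := by
      rw [show (1:ℝ) = Real.sqrt 1 by simp [Real.sqrt_one]]
      exact Real.sqrt_le_sqrt hT1.le
    have hrtsq : rt * rt = T := Real.mul_self_sqrt hT0.le
    set x := 1 / rt with hx_def
    have hx1 : 1 ≤ x := by
      rw [hx_def, le_div_iff₀ hrt0]; linarith
    obtain ⟨m, hm1, hxm, hm2x⟩ : ∃ m : ℕ, 1 ≤ m ∧ x ≤ (m:ℝ) ∧ (m:ℝ) ≤ 2 * x := by
      refine ⟨⌈x⌉₊, Nat.ceil_pos.mpr (by linarith), Nat.le_ceil x, ?_⟩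
      have := Nat.ceil_lt_add_one (by linarith : (0:ℝ) ≤ x)
      linarith
    have hmR : (0:ℝ) < m := by exact_mod_cast hm1
    have hinv : 1 / (m:ℝ) ≤ rt := by
      rw [div_le_iff₀ hmR]
      have hxrt : x * rt = 1 := by rw [hx_def]; field_simp
      nlinarith
    set lam := ε * n / (4 * L) with hlam_def
    have hlam0 : 0 < lam := by positivity
    set ι : (X → Fin (m+1)) → (X → ℝ) := fun g x => ((g x : ℕ) : ℝ) / m with hι_def
    have hι01 : ∀ (g : X → Fin (m+1)) (x : X), ι g x ∈ Set.Icc (0:ℝ) 1 := by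
      intro g x
      constructor
      · positivity
      · rw [hι_def]
        simp only
        rw [div_le_one hmR]
        exact_mod_cast Nat.lt_succ_iff.mp (g x).isLt
    have hιmono : ∀ g ∈ DPIso.Hfin X m, IsMonotone01 (ι g) := by
      intro g hg
      have hgm : Monotone g := by simpa [DPIso.Hfin] using hg
      refine ⟨fun a b hab => ?_, hι01 g⟩
      rw [hι_def]
      simp only
      gcongr
      exact_mod_cast hgm hab
    set score : (Fin n → X × ℝ) → (X → Fin (m+1)) → ℝ :=
      fun D g => empRisk ℓ (ι g) D with hscore_def
    set Z : (Fin n → X × ℝ) → ℝ :=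
      fun D => ∑ g' ∈ DPIso.Hfin X m, Real.exp (-(lam * score D g')) with hZ_def
    have hZpos : ∀ D, 0 < Z D := fun D =>
      Finset.sum_pos (fun _ _ => Real.exp_pos _) (DPIso.Hfin_nonempty m)
    set p : (Fin n → X × ℝ) → (X → Fin (m+1)) → ℝ :=
      fun D g => Real.exp (-(lam * score D g)) / Z D with hp_def
    have hp0 : ∀ D g, 0 ≤ p D g := fun D g =>
      div_nonneg (Real.exp_pos _).le (hZpos D).le
    have hpsum : ∀ D, ∑ g ∈ DPIso.Hfin X m, p D g = 1 := fun D => by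
      rw [hp_def]
      simp only
      rw [← Finset.sum_div]
      exact div_self (hZpos D).ne'
    refine ⟨fun D => ∑ g ∈ DPIso.Hfin X m, ENNReal.ofReal (p D g) • Measure.dirac (ι g),
      ?_, ?_, ?_⟩
    · -- IsIsoRegAlg
      intro D hD
      show IsProbabilityMeasure (∑ g ∈ DPIso.Hfin X m, ENNReal.ofReal (p D g) • Measure.dirac (ι g))
        ∧ (∑ g ∈ DPIso.Hfin X m, ENNReal.ofReal (p D g) • Measure.dirac (ι g)) {f | IsMonotone01 f} = 1
      have huniv : (∑ g ∈ DPIso.Hfin X m, ENNReal.ofReal (p D g) • Measure.dirac (ι g))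
          Set.univ = 1 := by
        rw [DPIso.mix_apply_of_mem _ _ _ (fun g _ => Set.mem_univ _),
          ← ENNReal.ofReal_sum_of_nonneg (fun g _ => hp0 D g), hpsum D, ENNReal.ofReal_one]
      refine ⟨⟨huniv⟩, ?_⟩
      rw [DPIso.mix_apply_of_mem (DPIso.Hfin X m) (fun g => ENNReal.ofReal (p D g)) ι
          (S := {f | IsMonotone01 f}) (fun g hg => hιmono g hg),
        ← ENNReal.ofReal_sum_of_nonneg (fun g _ => hp0 D g), hpsum D, ENNReal.ofReal_one]
    · -- DP
      rintro D D' ⟨hD, hD', i, hoff⟩ S hS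
      show (∑ g ∈ DPIso.Hfin X m, ENNReal.ofReal (p D g) • Measure.dirac (ι g)) S
        ≤ ENNReal.ofReal (Real.exp ε)
            * ((∑ g ∈ DPIso.Hfin X m, ENNReal.ofReal (p D' g) • Measure.dirac (ι g)) S)
          + ENNReal.ofReal 0
      have hkey : ∀ g ∈ DPIso.Hfin X m, p D g ≤ Real.exp ε * p D' g := by
        intro g hg
        have cross : Real.exp (-(lam * score D g)) * Z D'
            ≤ (Real.exp ε * Real.exp (-(lam * score D' g))) * Z D := by
          rw [hZ_def]
          simp only
          rw [Finset.mul_sum, Finset.mul_sum]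
          refine Finset.sum_le_sum fun g' hg' => ?_
          rw [← Real.exp_add, mul_assoc, ← Real.exp_add, ← Real.exp_add]
          apply Real.exp_le_exp.mpr
          have hsens := DPIso.sens hℓ hL0 hn hD hD' hoff
            (fun x => hι01 g' x) (fun x => hι01 g x)
          have hlam2 : lam * (2 * L / n) = ε / 2 := by
            rw [hlam_def]; field_simp; ring
          have hmul := mul_le_mul_of_nonneg_left hsens hlam0.le
          rw [hlam2] at hmul
          rw [hscore_def]
          simp only
          nlinarith
        rw [hp_def]
        simp only
        rw [div_le_iff₀ (hZpos D)]
        have h2 : Real.exp ε * (Real.exp (-(lam * score D' g)) / Z D') * Z D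
            = (Real.exp ε * Real.exp (-(lam * score D' g)) * Z D) / Z D' := by ring
        rw [h2, le_div_iff₀ (hZpos D')]
        exact cross
      rw [DPIso.mix_apply, DPIso.mix_apply]
      have hsum_le : ∑ g ∈ DPIso.Hfin X m, ENNReal.ofReal (p D g) * (Measure.dirac (ι g)) S
          ≤ ∑ g ∈ DPIso.Hfin X m,
            ENNReal.ofReal (Real.exp ε) * (ENNReal.ofReal (p D' g) * (Measure.dirac (ι g)) S) := by
        refine Finset.sum_le_sum fun g hg => ?_
        rw [← mul_assoc, ← ENNReal.ofReal_mul (Real.exp_nonneg ε)]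
        exact mul_le_mul_left (ENNReal.ofReal_le_ofReal (hkey g hg)) _
      calc (∑ g ∈ DPIso.Hfin X m, ENNReal.ofReal (p D g) * (Measure.dirac (ι g)) S)
          ≤ _ := hsum_le
        _ = ENNReal.ofReal (Real.exp ε)
            * ∑ g ∈ DPIso.Hfin X m, ENNReal.ofReal (p D' g) * (Measure.dirac (ι g)) S := by
            rw [Finset.mul_sum]
        _ ≤ _ + ENNReal.ofReal 0 := le_self_add
    · -- utility
      intro D hD
      show (∫ f, empRisk ℓ f D ∂(∑ g ∈ DPIso.Hfin X m,
          ENNReal.ofReal (p D g) • Measure.dirac (ι g))) - optRisk ℓ D ≤ 100 * L * rt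
      rw [DPIso.mix_integral (DPIso.Hfin X m) (p D) (fun g _ => hp0 D g) ι
        (fun f => empRisk ℓ f D)]
      obtain ⟨g0, hg0, hg0min⟩ :=
        Finset.exists_min_image (DPIso.Hfin X m) (score D) (DPIso.Hfin_nonempty m)
      have hgibbs := DPIso.gibbs_expect (DPIso.Hfin X m) (score D) hg0 hg0min hlam0
      have hEbound : ∑ g ∈ DPIso.Hfin X m, p D g * empRisk ℓ (ι g) D
          ≤ score D g0 + 2 * (Real.log (DPIso.Hfin X m).card + 1) / lam := by
        refine le_trans (le_of_eq ?_) hgibbs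
        exact Finset.sum_congr rfl fun g _ => rfl
      -- rounding
      have hround : ∀ fm : {g : X → ℝ // IsMonotone01 g},
          score D g0 ≤ empRisk ℓ fm.1 D + L * (1/m) := by
        rintro ⟨f, hfmono, hf01⟩
        have hgx : ∀ v : X, ⌊(m:ℝ) * f v⌋₊ < m + 1 := by
          intro v
          refine Nat.lt_succ_of_le ?_
          have h1 : (m:ℝ) * f v ≤ (m:ℝ) := mul_le_of_le_one_right hmR.le (hf01 v).2
          calc ⌊(m:ℝ) * f v⌋₊ ≤ ⌊(m:ℝ)⌋₊ := Nat.floor_le_floor h1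
            _ = m := Nat.floor_natCast m
        set g : X → Fin (m+1) := fun v => ⟨⌊(m:ℝ) * f v⌋₊, hgx v⟩ with hg_def
        have hgmono : Monotone g := by
          intro a b hab
          rw [hg_def]
          simp only [Fin.mk_le_mk]
          exact Nat.floor_le_floor (mul_le_mul_of_nonneg_left (hfmono hab) hmR.le)
        have hgmem : g ∈ DPIso.Hfin X m := by
          simp [DPIso.Hfin, hgmono]
        have hclose : ∀ v : X, |ι g v - f v| ≤ 1/m := by
          intro v
          have hfl : ((⌊(m:ℝ) * f v⌋₊ : ℕ) : ℝ) ≤ (m:ℝ) * f v :=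
            Nat.floor_le (mul_nonneg hmR.le (hf01 v).1)
          have hfu : (m:ℝ) * f v < (⌊(m:ℝ) * f v⌋₊ : ℕ) + 1 :=
            Nat.lt_floor_add_one _
          have hιg : ι g v = ((⌊(m:ℝ) * f v⌋₊ : ℕ) : ℝ) / m := rfl
          rw [hιg, abs_sub_le_iff]
          constructor
          · have : ((⌊(m:ℝ) * f v⌋₊ : ℕ) : ℝ) / m ≤ f v := by
              rw [div_le_iff₀ hmR]; linarith [hfl]
            have h1m : (0:ℝ) < 1/m := by positivity
            linarith
          · have : f v ≤ (((⌊(m:ℝ) * f v⌋₊ : ℕ) : ℝ) + 1) / m := by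
              rw [le_div_iff₀ hmR]; linarith [hfu]
            have hsplit : (((⌊(m:ℝ) * f v⌋₊ : ℕ) : ℝ) + 1) / m
                = ((⌊(m:ℝ) * f v⌋₊ : ℕ) : ℝ) / m + 1/m := by ring
            linarith [this, hsplit]
        have hstep : score D g ≤ empRisk ℓ f D + L * (1/m) := by
          rw [hscore_def]
          exact DPIso.empRisk_le_of_close hℓ hL0 hn hD (fun v => hι01 g v) hf01 hclose
        exact le_trans (hg0min g hgmem) hstep
      have hopt : score D g0 - L * (1/m) ≤ optRisk ℓ D := by
        unfold optRisk
        refine le_ciInf fun fm => ?_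
        linarith [hround fm]
      -- log-card bound
      have hK1 : 1 ≤ (DPIso.Hfin X m).card := Finset.card_pos.mpr (DPIso.Hfin_nonempty m)
      have hK1R : (1:ℝ) ≤ ((DPIso.Hfin X m).card : ℝ) := by exact_mod_cast hK1
      have hKnat : (DPIso.Hfin X m).card ≤ (N + 1) ^ ((w + 1) * m) := by
        rw [pow_mul]
        exact DPIso.card_Hfin_le hN1 m
      have hlogK : Real.log ((DPIso.Hfin X m).card : ℝ)
          ≤ ((w:ℝ) + 1) * m * Real.log ((N:ℝ) + 1) := by
        calc Real.log ((DPIso.Hfin X m).card : ℝ)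
            ≤ Real.log (((N + 1) ^ ((w + 1) * m) : ℕ) : ℝ) := by
              apply Real.log_le_log (by linarith)
              exact_mod_cast hKnat
          _ = ((w:ℝ) + 1) * m * Real.log ((N:ℝ) + 1) := by
              push_cast
              rw [Real.log_pow]
              push_cast
              ring
      have hlogNpos : (0:ℝ) < Real.log N := by nlinarith
      have hlogN1 : Real.log ((N:ℝ) + 1) ≤ 2 * Real.log N := by
        have hNR : (2:ℝ) ≤ N := by exact_mod_cast hN2
        have hle : ((N:ℝ) + 1) ≤ (N:ℝ)^2 := by nlinarith
        calc Real.log ((N:ℝ) + 1) ≤ Real.log ((N:ℝ)^2) :=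
              Real.log_le_log (by positivity) hle
          _ = 2 * Real.log N := by rw [Real.log_pow]; norm_num
      have hlogK2 : Real.log ((DPIso.Hfin X m).card : ℝ) ≤ 4 * w * m * Real.log N := by
        have h1 : ((w:ℝ) + 1) * m * Real.log ((N:ℝ) + 1)
            ≤ ((w:ℝ) + 1) * m * (2 * Real.log N) := by
          apply mul_le_mul_of_nonneg_left hlogN1
          positivity
        have h2 : ((w:ℝ) + 1) * m * (2 * Real.log N) ≤ (2*(w:ℝ)) * m * (2 * Real.log N) := by
          have hww : ((w:ℝ) + 1) ≤ 2 * w := by linarith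
          have hmn : (0:ℝ) ≤ (m:ℝ) := hmR.le
          exact mul_le_mul_of_nonneg_right (mul_le_mul_of_nonneg_right hww hmn)
            (by positivity : (0:ℝ) ≤ 2 * Real.log N)
        calc Real.log ((DPIso.Hfin X m).card : ℝ) ≤ _ := hlogK
          _ ≤ _ := h1
          _ ≤ (2*(w:ℝ)) * m * (2 * Real.log N) := h2
          _ = 4 * w * m * Real.log N := by ring
      -- final arithmetic
      have hlogKnn : 0 ≤ Real.log ((DPIso.Hfin X m).card : ℝ) := Real.log_nonneg hK1R
      have hTrt : rt * rt * (ε * n) = (w:ℝ) * Real.log N := by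
        rw [hrtsq, hT_def]
        field_simp
      have hdivlam : 2 * (Real.log ((DPIso.Hfin X m).card : ℝ) + 1) / lam
          = (8 * L * Real.log ((DPIso.Hfin X m).card : ℝ) + 8 * L) / (ε * n) := by
        rw [hlam_def]
        field_simp
        ring
      have h1 : Real.log ((DPIso.Hfin X m).card : ℝ) ≤ 8 * rt * (ε * n) := by
        have ha : 4 * (w:ℝ) * m * Real.log N = 4 * m * (rt * rt * (ε * n)) := by
          rw [hTrt]; ring
        have hb : 4 * (m:ℝ) * (rt * rt * (ε * n)) ≤ 4 * (2 * x) * (rt * rt * (ε * n)) := by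
          have : (0:ℝ) ≤ rt * rt * (ε * n) := by positivity
          nlinarith
        have hc : 4 * (2 * x) * (rt * rt * (ε * n)) = 8 * rt * (ε * n) := by
          rw [hx_def]
          field_simp
          ring
        calc Real.log ((DPIso.Hfin X m).card : ℝ) ≤ 4 * w * m * Real.log N := hlogK2
          _ = 4 * m * (rt * rt * (ε * n)) := ha
          _ ≤ 4 * (2 * x) * (rt * rt * (ε * n)) := hb
          _ = 8 * rt * (ε * n) := hc
      have h2 : (2:ℝ)/3 ≤ rt * (ε * n) := by
        nlinarith [mul_nonneg (mul_nonneg hrt0.le hen.le) (sub_nonneg.mpr hrt1)]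
      have hQ : (8 * L * Real.log ((DPIso.Hfin X m).card : ℝ) + 8 * L) / (ε * n)
          ≤ 76 * L * rt := by
        rw [div_le_iff₀ hen]
        nlinarith [mul_le_mul_of_nonneg_left h1 (by positivity : (0:ℝ) ≤ 8 * L),
          mul_le_mul_of_nonneg_left h2 (by positivity : (0:ℝ) ≤ 12 * L)]
      have hLm : L * (1/(m:ℝ)) ≤ L * rt := mul_le_mul_of_nonneg_left hinv hLpos.le
      have hfinal : ∑ g ∈ DPIso.Hfin X m, p D g * empRisk ℓ (ι g) D - optRisk ℓ D
          ≤ L * rt + 76 * L * rt := by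
        have := hEbound
        rw [hdivlam] at this
        linarith
      calc ∑ g ∈ DPIso.Hfin X m, p D g * empRisk ℓ (ι g) D - optRisk ℓ D
          ≤ L * rt + 76 * L * rt := hfinal
        _ ≤ 100 * L * rt := by nlinarith
  · -- trivial mechanism: point mass at the zero function
    have hzero01 : IsMonotone01 (fun _ : X => (0:ℝ)) :=
      ⟨monotone_const, fun _ => ⟨le_refl _, zero_le_one⟩⟩
    refine ⟨fun _ => Measure.dirac (fun _ => (0:ℝ)), ?_, ?_, ?_⟩
    · intro D hD
      exact ⟨by infer_instance, Measure.dirac_apply_of_mem hzero01⟩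
    · intro D D' hDD' S hS
      have h1 : (1:ENNReal) ≤ ENNReal.ofReal (Real.exp ε) := by
        rw [ENNReal.one_le_ofReal]
        exact Real.one_le_exp hε.le
      calc Measure.dirac (fun _ : X => (0:ℝ)) S
          ≤ ENNReal.ofReal (Real.exp ε) * Measure.dirac (fun _ : X => (0:ℝ)) S :=
            le_mul_of_one_le_left zero_le h1
        _ ≤ _ + ENNReal.ofReal 0 := le_self_add
    · intro D hD
      show (∫ f, empRisk ℓ f D ∂(Measure.dirac (fun _ : X => (0:ℝ)))) - optRisk ℓ D
        ≤ 100 * L * Real.sqrt T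
      rw [integral_dirac]
      have key : ∀ gm : {g : X → ℝ // IsMonotone01 g},
          empRisk ℓ (fun _ : X => (0:ℝ)) D ≤ empRisk ℓ gm.1 D + L * 1 := by
        intro gm
        refine DPIso.empRisk_le_of_close hℓ hL0 hn hD
          (fun _ => ⟨le_refl _, zero_le_one⟩) (fun v => gm.2.2 v) ?_
        intro v
        obtain ⟨ha, hb⟩ := gm.2.2 v
        rw [abs_le]; constructor <;> simp <;> linarith
      have hopt : empRisk ℓ (fun _ : X => (0:ℝ)) D - L ≤ optRisk ℓ D := by
        unfold optRisk
        refine le_ciInf fun gm => ?_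
        linarith [key gm]
      rcases not_and_or.mp hcase with hLle | hTge
      · have hLz : L = 0 := le_antisymm (not_lt.mp hLle) hL0
        rw [hLz]
        rw [hLz] at hopt
        have : (100:ℝ) * 0 * Real.sqrt T = 0 := by ring
        rw [this]
        linarith
      · have hT1 : 1 ≤ T := not_lt.mp hTge
        have hsq : 1 ≤ Real.sqrt T := by
          rw [show (1:ℝ) = Real.sqrt 1 by simp [Real.sqrt_one]]
          exact Real.sqrt_le_sqrt hT1
        have hdiff : empRisk ℓ (fun _ : X => (0:ℝ)) D - optRisk ℓ D ≤ L := by linarith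
        calc empRisk ℓ (fun _ : X => (0:ℝ)) D - optRisk ℓ D ≤ L := hdiff
          _ ≤ 100 * L * Real.sqrt T := by nlinarith
end
end

section
/- Let X be a finite partially ordered set of width w, and let T ≥ 1 be an integer. Then the number of monotone functions from X to the chain T = {0, 1/T, 2/T, ..., 1} (a totally ordered set of T+1 elements) is at most (|X| + T)^{w·T}. -/
open MeasureTheory

noncomputable section

open Classical in
/-- Minimal elements of the level set `{x | c ≤ f x}`. -/
noncomputable def minSet {X : Type} [PartialOrder X] [Fintype X] {T : ℕ}
    (f : X → Fin (T + 1)) (c : ℕ) : Finset X :=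
  Finset.univ.filter (fun x => c ≤ (f x).1 ∧ ∀ y, c ≤ (f y).1 → y ≤ x → x ≤ y)

theorem minSet_antichain {X : Type} [PartialOrder X] [Fintype X] {T : ℕ}
    (f : X → Fin (T + 1)) (c : ℕ) :
    IsAntichain (· ≤ ·) ((minSet f c : Finset X) : Set X) := by
  intro x hx y hy hxy hle
  simp only [minSet, Finset.coe_filter, Set.mem_setOf_eq, Finset.mem_filter] at hx hy
  exact hxy (le_antisymm hle (hy.2.2 x hx.2.1 hle))

theorem mem_minSet_iff {X : Type} [PartialOrder X] [Fintype X] {T : ℕ}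
    {f : X → Fin (T + 1)} (hf : Monotone f) (c : ℕ) (x : X) :
    c ≤ (f x).1 ↔ ∃ m ∈ minSet f c, m ≤ x := by
  classical
  constructor
  · intro hx
    have hne : (Finset.univ.filter (fun y => c ≤ (f y).1 ∧ y ≤ x)).Nonempty :=
      ⟨x, by simp [hx]⟩
    obtain ⟨m, hm, hmin⟩ : ∃ m ∈ Finset.univ.filter (fun y => c ≤ (f y).1 ∧ y ≤ x),
        ∀ y ∈ Finset.univ.filter (fun y => c ≤ (f y).1 ∧ y ≤ x), ¬ y < m := by
      obtain ⟨m, hm⟩ := Finset.exists_minimal hne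
      exact ⟨m, hm.1, fun y hy hlt => hlt.not_ge (hm.2 hy hlt.le)⟩
    simp only [Finset.mem_filter, Finset.mem_univ, true_and] at hm
    refine ⟨m, ?_, hm.2⟩
    simp only [minSet, Finset.mem_filter, Finset.mem_univ, true_and]
    refine ⟨hm.1, fun y hy hyx => ?_⟩
    by_contra hmy
    exact hmin y (by simp [hy, hyx.trans hm.2]) (lt_of_le_of_ne hyx (fun h => hmy (h ▸ le_refl _)))
  · rintro ⟨m, hm, hmx⟩
    simp only [minSet, Finset.mem_filter, Finset.mem_univ, true_and] at hm
    exact hm.1.trans (hf hmx)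

theorem antichain_card_le {X : Type} [PartialOrder X] [Fintype X]
    (A : Finset X) (hA : IsAntichain (· ≤ ·) (A : Set X)) :
    A.card ≤ posetWidth X := by
  apply le_csSup
  · exact ⟨Fintype.card X, fun k ⟨B, _, hB⟩ => hB ▸ Finset.card_le_univ B⟩
  · exact ⟨A, hA, rfl⟩

/-- **Counting monotone functions into a chain.** For a finite poset `X` of width `w` and
an integer `T ≥ 1`, the number of monotone functions from `X` into a chain of `T + 1`
elements (here `Fin (T+1)`, representing `{0, 1/T, …, 1}`) is at most `(|X| + T)^(w·T)`. -/
theorem count_monotone_functions_into_chain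
    (X : Type) [PartialOrder X] [Fintype X] (w T : ℕ)
    (hw : posetWidth X = w) (hT : 1 ≤ T) :
    Nat.card {f : X → Fin (T + 1) // Monotone f} ≤ (Fintype.card X + T) ^ (w * T) := by
  classical
  subst hw
  set w := posetWidth X with hw
  -- a helper: if two monotone functions have the same level-set minimal elements, then `≤`
  have hle : ∀ (f g : {f : X → Fin (T + 1) // Monotone f}),
      (∀ t : Fin T, minSet f.1 (t.1 + 1) = minSet g.1 (t.1 + 1)) →
      ∀ x, (f.1 x).1 ≤ (g.1 x).1 := by
    intro f g hms x
    by_contra h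
    push_neg at h
    have hgT : (g.1 x).1 < T := lt_of_lt_of_le h (Nat.lt_succ_iff.mp (f.1 x).2)
    set t : Fin T := ⟨(g.1 x).1, hgT⟩
    have h1 : t.1 + 1 ≤ (f.1 x).1 := h
    rw [mem_minSet_iff f.2, hms t, ← mem_minSet_iff g.2] at h1
    have ht : t.1 = (g.1 x).1 := rfl
    omega
  have key : Nat.card {f : X → Fin (T + 1) // Monotone f}
      ≤ Nat.card (Fin T → Fin w → Option X) := by
    apply Nat.card_le_card_of_injective
      (fun f : {f : X → Fin (T + 1) // Monotone f} =>
        fun (t : Fin T) (i : Fin w) => (minSet f.1 (t.1 + 1)).toList[i.1]?)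
    intro f g hfg
    have hms : ∀ t : Fin T, minSet f.1 (t.1 + 1) = minSet g.1 (t.1 + 1) := by
      intro t
      have hcard : ∀ h : X → Fin (T + 1), (minSet h (t.1 + 1)).card ≤ w :=
        fun h => antichain_card_le _ (minSet_antichain h _)
      have hlist : (minSet f.1 (t.1 + 1)).toList = (minSet g.1 (t.1 + 1)).toList := by
        apply List.ext_getElem?
        intro i
        by_cases hi : i < w
        · exact congrFun (congrFun hfg t) ⟨i, hi⟩
        · rw [List.getElem?_eq_none, List.getElem?_eq_none] <;>
            rw [Finset.length_toList] <;> [skip; skip] <;>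
            exact le_trans (hcard _) (not_lt.mp hi)
      ext x
      rw [← Finset.mem_toList, hlist, Finset.mem_toList]
    ext x
    exact le_antisymm (hle f g hms x) (hle g f (fun t => (hms t).symm) x)
  refine key.trans ?_
  have hcardeq : Nat.card (Fin T → Fin w → Option X) = (Fintype.card X + 1) ^ (w * T) := by
    simp [Nat.card_eq_fintype_card, Fintype.card_fun, Fintype.card_option,
      ← pow_mul, Nat.mul_comm]
  rw [hcardeq]
  exact Nat.pow_le_pow_left (by omega) _
end
end
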